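/- Let p and q be two probability measures on a finite sample space Ω with KL-divergence κ = KL(p; q). Then for any event E with p(E) > 0, the probabilities satisfy q(E) ≥ p(E) · exp(−(κ + 1/e)/p(E)). -/

import Mathlib

/-- `t * log t ≥ -1/e` for `t ≥ 0`. -/
lemma aux_mul_log_ge {t : ℝ} (ht : 0 ≤ t) : -(1 / Real.exp 1) ≤ t * Real.log t := by
  rcases eq_or_lt_of_le ht with h | h
  · simp [← h]
    positivity
  · set u := Real.log t with hu
    have htu : t = Real.exp u := (Real.exp_log h).symm
    have key : -u ≤ Real.exp (-1 - u) := by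
      have := Real.add_one_le_exp (-1 - u)
      linarith
    have h2 : (-u) * Real.exp u ≤ Real.exp (-1 - u) * Real.exp u :=
      mul_le_mul_of_nonneg_right key (Real.exp_pos u).le
    rw [← Real.exp_add] at h2
    have : -1 - u + u = -1 := by ring
    rw [this] at h2
    have : Real.exp (-1) = 1 / Real.exp 1 := by
      rw [Real.exp_neg]; ring
    rw [htu]
    nlinarith [h2]

/-- per-term bound: `p * log (p/q) ≥ -q/e`. -/
lemma aux_term_ge {p q : ℝ} (hp : 0 ≤ p) (hq : 0 ≤ q) (hac : q = 0 → p = 0) :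
    -(q * (1 / Real.exp 1)) ≤ p * Real.log (p / q) := by
  rcases eq_or_lt_of_le hq with h | h
  · simp [← h, hac h.symm]
  · have := aux_mul_log_ge (t := p / q) (by positivity)
    have h2 : q * (-(1 / Real.exp 1)) ≤ q * (p / q * Real.log (p / q)) :=
      mul_le_mul_of_nonneg_left this h.le
    have h3 : q * (p / q * Real.log (p / q)) = p * Real.log (p / q) := by
      field_simp
    rw [h3] at h2
    linarith

/-- KL-divergence distinguishing lemma: for probability measures `p, q` on a finite
sample space with `κ = KL(p; q)`, any event `E` with `p(E) > 0` satisfies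
`q(E) ≥ p(E) · exp(−(κ + 1/e)/p(E))`. -/
theorem kl_distinguishing {Ω : Type*} [Fintype Ω] (p q : Ω → ℝ)
    (hp : ∀ x, 0 ≤ p x) (hq : ∀ x, 0 ≤ q x)
    (hp1 : ∑ x, p x = 1) (hq1 : ∑ x, q x = 1)
    (hac : ∀ x, q x = 0 → p x = 0)
    (E : Finset Ω) (hE : 0 < ∑ x ∈ E, p x) :
    (∑ x ∈ E, p x) *
        Real.exp (-((∑ x, p x * Real.log (p x / q x)) + 1 / Real.exp 1) / (∑ x ∈ E, p x))
      ≤ ∑ x ∈ E, q x := by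
  classical
  set a := ∑ x ∈ E, p x with ha
  set b := ∑ x ∈ E, q x with hb
  set κ := ∑ x, p x * Real.log (p x / q x) with hκ
  -- b > 0
  have hb0 : 0 < b := by
    obtain ⟨x, hxE, hxp⟩ : ∃ x ∈ E, 0 < p x := by
      by_contra hcon
      push_neg at hcon
      have : a ≤ 0 := Finset.sum_nonpos fun x hx => hcon x hx
      linarith
    have hqx : 0 < q x := by
      rcases eq_or_lt_of_le (hq x) with h | h
      · exact absurd (hac x h.symm) (ne_of_gt hxp)
      · exact h
    exact lt_of_lt_of_le hqx (Finset.single_le_sum (fun i _ => hq i) hxE)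
  -- Jensen / log-sum inequality on E
  have hlogsum : a * Real.log (a / b) ≤ ∑ x ∈ E, p x * Real.log (p x / q x) := by
    have hjensen := Real.convexOn_mul_log.map_sum_le (t := E) (w := fun x => q x / b)
      (p := fun x => p x / q x)
      (fun i _ => div_nonneg (hq i) hb0.le)
      (by rw [← Finset.sum_div]; field_simp; exact hb.symm)
      (fun i _ => by
        have := hp i; have := hq i
        simp only [Set.mem_Ici]; positivity)
    have hsum_pts : ∑ x ∈ E, (q x / b) • (p x / q x) = a / b := by
      rw [ha, Finset.sum_div]
      refine Finset.sum_congr rfl fun x hx => ?_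
      rcases eq_or_lt_of_le (hq x) with h | h
      · simp [← h, hac x h.symm]
      · simp only [smul_eq_mul]
        field_simp
    rw [hsum_pts] at hjensen
    have hrhs : ∑ x ∈ E, (q x / b) • ((p x / q x) * Real.log (p x / q x))
        = (∑ x ∈ E, p x * Real.log (p x / q x)) / b := by
      rw [Finset.sum_div]
      refine Finset.sum_congr rfl fun x hx => ?_
      rcases eq_or_lt_of_le (hq x) with h | h
      · simp [← h, hac x h.symm]
      · simp only [smul_eq_mul]
        field_simp
    rw [hrhs] at hjensen
    have := mul_le_mul_of_nonneg_left hjensen hb0.le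
    calc a * Real.log (a / b) = b * (a / b * Real.log (a / b)) := by field_simp
      _ ≤ b * ((∑ x ∈ E, p x * Real.log (p x / q x)) / b) := this
      _ = ∑ x ∈ E, p x * Real.log (p x / q x) := by field_simp
  -- complement bound
  have hcompl : -(1 / Real.exp 1) ≤ ∑ x ∈ Eᶜ, p x * Real.log (p x / q x) := by
    have h1 : ∑ x ∈ Eᶜ, (-(q x * (1 / Real.exp 1))) ≤ ∑ x ∈ Eᶜ, p x * Real.log (p x / q x) :=
      Finset.sum_le_sum fun x _ => aux_term_ge (hp x) (hq x) (hac x)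
    have h2 : ∑ x ∈ Eᶜ, (-(q x * (1 / Real.exp 1)))
        = -((∑ x ∈ (Eᶜ : Finset Ω), q x) * (1 / Real.exp 1)) := by
      rw [Finset.sum_neg_distrib, Finset.sum_mul]
    have h3 : ∑ x ∈ (Eᶜ : Finset Ω), q x ≤ 1 := by
      have : b + ∑ x ∈ (Eᶜ : Finset Ω), q x = 1 := by
        rw [hb, ← hq1, Finset.sum_add_sum_compl]
      linarith
    have h4 : (∑ x ∈ (Eᶜ : Finset Ω), q x) * (1 / Real.exp 1) ≤ 1 / Real.exp 1 := by
      have he : (0:ℝ) < 1 / Real.exp 1 := by positivity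
      nlinarith
    linarith
  -- combine: κ = sum over E + sum over Eᶜ
  have hsplit : κ = (∑ x ∈ E, p x * Real.log (p x / q x))
      + ∑ x ∈ Eᶜ, p x * Real.log (p x / q x) := by
    rw [hκ, ← Finset.sum_add_sum_compl E]
  have hkey : a * Real.log (a / b) ≤ κ + 1 / Real.exp 1 := by
    rw [hsplit]; linarith
  -- finish
  have hlog : -(κ + 1 / Real.exp 1) / a ≤ Real.log (b / a) := by
    rw [Real.log_div hb0.ne' hE.ne', div_le_iff₀ hE] at *
    rw [Real.log_div hE.ne' hb0.ne'] at hkey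
    nlinarith [hkey]
  have := Real.exp_le_exp.mpr hlog
  rw [Real.exp_log (by positivity)] at this
  calc a * Real.exp (-(κ + 1 / Real.exp 1) / a) ≤ a * (b / a) :=
        mul_le_mul_of_nonneg_left this hE.le
    _ = b := by field_simp
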